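/- For every real r ≥ 2, every real X > 0 and every real A, one has ∫₀¹ (1−θ) |A + Xθ|^(r−2) dθ ≥ X^(r−2) / (2^(r−2) · r · (r−1)). -/

import Mathlib

open Real

lemma aux_phi_nonneg {r : ℝ} (hr : 2 ≤ r) {x : ℝ} (hx : 0 ≤ x) :
    x * |x| ^ (r - 2) = x ^ (r - 1) := by
  rw [abs_of_nonneg hx]
  rcases hx.eq_or_lt with rfl | hx'
  · simp [Real.zero_rpow (show r - 1 ≠ 0 by linarith)]
  · nth_rewrite 1 [← Real.rpow_one x]
    rw [← Real.rpow_add hx']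
    ring_nf

lemma aux_superadd {p a b : ℝ} (hp : 1 ≤ p) (ha : 0 ≤ a) (hb : 0 ≤ b) :
    a ^ p + b ^ p ≤ (a + b) ^ p := by
  lift a to NNReal using ha
  lift b to NNReal using hb
  exact_mod_cast NNReal.add_rpow_le_rpow_add a b hp

lemma aux_twopow {p a b : ℝ} (hp : 1 ≤ p) (ha : 0 ≤ a) (hb : 0 ≤ b) :
    (a + b) ^ p ≤ 2 ^ (p - 1) * (a ^ p + b ^ p) := by
  lift a to NNReal using ha
  lift b to NNReal using hb
  exact_mod_cast NNReal.rpow_add_le_mul_rpow_add_rpow a b hp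

lemma aux_mono {r : ℝ} (hr : 2 ≤ r) {u v : ℝ} (hvu : v ≤ u) :
    2 ^ (2 - r) * (u - v) ^ (r - 1) ≤ u * |u| ^ (r - 2) - v * |v| ^ (r - 2) := by
  have hq : (1 : ℝ) ≤ r - 1 := by linarith
  have h2r : (2 : ℝ) ^ (2 - r) ≤ 1 :=
    Real.rpow_le_one_of_one_le_of_nonpos one_le_two (by linarith)
  have h2rpos : (0 : ℝ) < 2 ^ (2 - r) := Real.rpow_pos_of_pos two_pos _
  rcases le_or_gt 0 v with hv | hv
  · have hu : 0 ≤ u := hv.trans hvu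
    rw [aux_phi_nonneg hr hu, aux_phi_nonneg hr hv]
    have h1 : v ^ (r - 1) + (u - v) ^ (r - 1) ≤ u ^ (r - 1) := by
      have := aux_superadd hq hv (sub_nonneg.mpr hvu)
      simpa using this
    have h2 : 2 ^ (2 - r) * (u - v) ^ (r - 1) ≤ (u - v) ^ (r - 1) := by
      nth_rewrite 2 [← one_mul ((u - v) ^ (r - 1))]
      exact mul_le_mul_of_nonneg_right h2r (Real.rpow_nonneg (by linarith) _)
    linarith
  · rcases le_or_gt u 0 with hu | hu
    · have e1 : u * |u| ^ (r - 2) = -((-u) * |-u| ^ (r - 2)) := by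
        rw [abs_neg]; ring
      have e2 : v * |v| ^ (r - 2) = -((-v) * |-v| ^ (r - 2)) := by
        rw [abs_neg]; ring
      rw [e1, e2, aux_phi_nonneg hr (by linarith : (0:ℝ) ≤ -u),
        aux_phi_nonneg hr (by linarith : (0:ℝ) ≤ -v)]
      have h1 : (-u) ^ (r - 1) + (u - v) ^ (r - 1) ≤ (-v) ^ (r - 1) := by
        have := aux_superadd hq (by linarith : (0:ℝ) ≤ -u) (sub_nonneg.mpr hvu)
        have e : -u + (u - v) = -v := by ring
        rwa [e] at this
      have h2 : 2 ^ (2 - r) * (u - v) ^ (r - 1) ≤ (u - v) ^ (r - 1) := by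
        nth_rewrite 2 [← one_mul ((u - v) ^ (r - 1))]
        exact mul_le_mul_of_nonneg_right h2r (Real.rpow_nonneg (by linarith) _)
      linarith
    · -- v < 0 < u
      have e2 : v * |v| ^ (r - 2) = -((-v) * |-v| ^ (r - 2)) := by
        rw [abs_neg]; ring
      rw [e2, aux_phi_nonneg hr hu.le, aux_phi_nonneg hr (by linarith : (0:ℝ) ≤ -v)]
      have h1 : (u - v) ^ (r - 1) ≤ 2 ^ (r - 1 - 1) * (u ^ (r - 1) + (-v) ^ (r - 1)) := by
        have := aux_twopow hq hu.le (by linarith : (0:ℝ) ≤ -v)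
        have e : u + -v = u - v := by ring
        rwa [e] at this
      have h3 : 2 ^ (2 - r) * (u - v) ^ (r - 1) ≤
          2 ^ (2 - r) * (2 ^ (r - 1 - 1) * (u ^ (r - 1) + (-v) ^ (r - 1))) :=
        mul_le_mul_of_nonneg_left h1 h2rpos.le
      have h4 : (2:ℝ) ^ (2 - r) * 2 ^ (r - 1 - 1) = 1 := by
        rw [← Real.rpow_add two_pos, show 2 - r + (r - 1 - 1) = 0 by ring, Real.rpow_zero]
      calc 2 ^ (2 - r) * (u - v) ^ (r - 1) ≤
            2 ^ (2 - r) * (2 ^ (r - 1 - 1) * (u ^ (r - 1) + (-v) ^ (r - 1))) := h3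
        _ = (2 ^ (2 - r) * 2 ^ (r - 1 - 1)) * (u ^ (r - 1) + (-v) ^ (r - 1)) := by ring
        _ = u ^ (r - 1) + (-v) ^ (r - 1) := by rw [h4]; ring
        _ = u ^ (r - 1) - -((-v) ^ (r - 1)) := by ring

lemma aux_hasDerivAt_phi {r : ℝ} (hr : 2 ≤ r) (x : ℝ) :
    HasDerivAt (fun y : ℝ => y * |y| ^ (r - 2)) ((r - 1) * |x| ^ (r - 2)) x := by
  rcases lt_trichotomy x 0 with hx | rfl | hx
  · -- x < 0
    have hne : -x ≠ 0 := by intro h; apply hx.ne; linarith [neg_eq_zero.mp h]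
    have h1 : HasDerivAt (fun y : ℝ => (-y) ^ (r - 1)) ((r - 1) * (-x) ^ (r - 2) * (-1)) x := by
      have : HasDerivAt (fun y : ℝ => (-y) ^ (r - 1)) _ x := (Real.hasDerivAt_rpow_const (p := r - 1) (Or.inl hne)).comp x (hasDerivAt_neg x)
      convert this using 1
      ring_nf
    have h2 : HasDerivAt (fun y : ℝ => -((-y) ^ (r - 1))) ((r - 1) * (-x) ^ (r - 2)) x := by
      have : HasDerivAt (fun y : ℝ => -((-y) ^ (r - 1))) _ x := h1.neg
      convert this using 1
      ring
    have h3 : HasDerivAt (fun y : ℝ => y * |y| ^ (r - 2)) ((r - 1) * (-x) ^ (r - 2)) x := by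
      apply h2.congr_of_eventuallyEq
      filter_upwards [eventually_lt_nhds hx] with y hy
      have : y * |y| ^ (r - 2) = -((-y) * |-y| ^ (r - 2)) := by rw [abs_neg]; ring
      rw [this, aux_phi_nonneg hr (by linarith : (0:ℝ) ≤ -y)]
    rwa [abs_of_neg hx]
  · -- x = 0
    rcases eq_or_lt_of_le hr with hr2 | hr2
    · have hfun : (fun y : ℝ => y * |y| ^ (r - 2)) = fun y : ℝ => y := by
        funext y
        rw [show r - 2 = 0 by rw [← hr2]; ring, Real.rpow_zero, mul_one]
      rw [hfun, show r - 2 = 0 by rw [← hr2]; ring, Real.rpow_zero]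
      rw [show r - 1 = 1 by rw [← hr2]; ring]
      simpa using hasDerivAt_id' (0 : ℝ)
    · have hz : (r - 1) * |(0:ℝ)| ^ (r - 2) = 0 := by
        rw [abs_zero, Real.zero_rpow (by linarith : r - 2 ≠ 0), mul_zero]
      rw [hz]
      rw [hasDerivAt_iff_tendsto_slope]
      have hc : ContinuousAt (fun y : ℝ => |y| ^ (r - 2)) 0 := by
        exact (Real.continuousAt_rpow_const _ _ (Or.inr (by linarith))).comp
          continuous_abs.continuousAt
      have h0 : (fun y : ℝ => |y| ^ (r - 2)) 0 = 0 := by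
        simp [Real.zero_rpow (show r - 2 ≠ 0 by linarith)]
      have := hc.tendsto
      simp only [h0] at this
      apply (this.mono_left nhdsWithin_le_nhds).congr'
      filter_upwards [self_mem_nhdsWithin] with y (hy : y ≠ 0)
      simp only [slope_def_field]
      field_simp
      simp
  · -- 0 < x
    have h1 : HasDerivAt (fun y : ℝ => y ^ (r - 1)) ((r - 1) * x ^ (r - 2)) x := by
      have := Real.hasDerivAt_rpow_const (p := r - 1) (Or.inl hx.ne')
      convert this using 2
      ring
    have h3 : HasDerivAt (fun y : ℝ => y * |y| ^ (r - 2)) ((r - 1) * x ^ (r - 2)) x := by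
      apply h1.congr_of_eventuallyEq
      filter_upwards [eventually_gt_nhds hx] with y hy
      rw [aux_phi_nonneg hr hy.le]
    rwa [abs_of_pos hx]

lemma aux_hasDerivAt_absr {r : ℝ} (hr : 2 ≤ r) (x : ℝ) :
    HasDerivAt (fun y : ℝ => |y| ^ r) (r * (x * |x| ^ (r - 2))) x := by
  have h := (hasDerivAt_id x).mul (aux_hasDerivAt_phi hr x)
  have hfun : (fun y : ℝ => y * (y * |y| ^ (r - 2))) = fun y : ℝ => |y| ^ r := by
    funext y
    rcases eq_or_ne y 0 with rfl | hy
    · simp [Real.zero_rpow (show r ≠ 0 by linarith)]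
    · have h2 : |y| ^ (2:ℝ) = y * y := by
        rw [show (2:ℝ) = ((2:ℕ):ℝ) by norm_num, Real.rpow_natCast, sq_abs, sq]
      rw [show r = 2 + (r - 2) by ring, Real.rpow_add (abs_pos.mpr hy), h2]
      ring_nf
  have h' : HasDerivAt (fun y : ℝ => y * (y * |y| ^ (r - 2))) _ x := h
  have := hfun ▸ h'
  convert this using 1
  simp only [id_eq]
  ring

lemma aux_cont_absr {p : ℝ} (hp : 0 ≤ p) (c d : ℝ) :
    Continuous (fun t : ℝ => |c + d * t| ^ p) := by
  exact (Real.continuous_rpow_const hp).comp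
    (continuous_abs.comp (by continuity))

lemma aux_hasDerivAt_inner {r : ℝ} (hr : 2 ≤ r) (A X t : ℝ) :
    HasDerivAt (fun s : ℝ => |A + X * s| ^ r)
      (r * ((A + X * t) * |A + X * t| ^ (r - 2)) * X) t := by
  have hin : HasDerivAt (fun s : ℝ => A + X * s) X t := by
    simpa using ((hasDerivAt_id t).const_mul X).const_add A
  exact (aux_hasDerivAt_absr hr (A + X * t)).comp t hin

lemma aux_taylor {r X A : ℝ} (hr : 2 ≤ r) (hX : 0 < X) :
    2 ^ (2 - r) * X ^ r + (|A| ^ r + r * X * (A * |A| ^ (r - 2))) ≤ |A + X| ^ r := by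
  set c : ℝ := 2 ^ (2 - r) * X ^ r with hc
  set G : ℝ → ℝ := fun t => |A + X * t| ^ r - r * X * (A * |A| ^ (r - 2)) * t - c * t ^ r
    with hG
  have hGd : ∀ t : ℝ, 0 < t → HasDerivAt G
      (r * ((A + X * t) * |A + X * t| ^ (r - 2)) * X
        - r * X * (A * |A| ^ (r - 2)) - c * (r * t ^ (r - 1))) t := by
    intro t ht
    exact ((aux_hasDerivAt_inner hr A X t).sub
      (((hasDerivAt_id t).const_mul (r * X * (A * |A| ^ (r - 2)))).congr_deriv (by simp))).sub
      ((Real.hasDerivAt_rpow_const (p := r) (Or.inl ht.ne')).const_mul c)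
  have hGderiv_nonneg : ∀ t ∈ Set.Ioo (0:ℝ) 1, 0 ≤
      (r * ((A + X * t) * |A + X * t| ^ (r - 2)) * X
        - r * X * (A * |A| ^ (r - 2)) - c * (r * t ^ (r - 1))) := by
    intro t ht
    have hmono := aux_mono hr (show A ≤ A + X * t by nlinarith [ht.1])
    have hXt : (A + X * t) - A = X * t := by ring
    rw [hXt] at hmono
    have hXtr : (X * t) ^ (r - 1) = X ^ (r - 1) * t ^ (r - 1) :=
      Real.mul_rpow hX.le ht.1.le
    have hXr : X * X ^ (r - 1) = X ^ r := by
      nth_rewrite 1 [← Real.rpow_one X]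
      rw [← Real.rpow_add hX]; ring_nf
    have h1 : r * X * (2 ^ (2 - r) * (X * t) ^ (r - 1)) ≤
        r * X * ((A + X * t) * |A + X * t| ^ (r - 2) - A * |A| ^ (r - 2)) := by
      apply mul_le_mul_of_nonneg_left hmono
      positivity
    have h2 : r * X * (2 ^ (2 - r) * (X * t) ^ (r - 1)) = c * (r * t ^ (r - 1)) := by
      rw [hXtr, hc, ← hXr]; ring
    linarith [h1, h2.symm.le]
  have hGcont : Continuous G := by
    apply ((aux_cont_absr (by linarith : (0:ℝ) ≤ r) A X).sub (by continuity)).sub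
    exact continuous_const.mul (Real.continuous_rpow_const (by linarith))
  have hmonoG : MonotoneOn G (Set.Icc (0:ℝ) 1) := by
    apply monotoneOn_of_deriv_nonneg (convex_Icc 0 1) hGcont.continuousOn
    · intro t ht
      rw [interior_Icc] at ht
      exact ((hGd t ht.1).differentiableAt).differentiableWithinAt
    · intro t ht
      rw [interior_Icc] at ht
      rw [(hGd t ht.1).deriv]
      exact hGderiv_nonneg t ht
  have h01 := hmonoG (Set.mem_Icc.mpr ⟨le_refl 0, zero_le_one⟩)
    (Set.mem_Icc.mpr ⟨zero_le_one, le_refl 1⟩) zero_le_one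
  have hG0 : G 0 = |A| ^ r := by
    simp [hG, Real.zero_rpow (show r ≠ 0 by linarith)]
  have hG1 : G 1 = |A + X| ^ r - r * X * (A * |A| ^ (r - 2)) - c := by
    simp [hG]
  rw [hG0, hG1] at h01
  linarith

/-- The integral estimate (eq:I21) of Appendix A: for `r ≥ 2`, `X > 0` and any real `A`,
`∫₀¹ (1−θ)|A + Xθ|^(r−2) dθ ≥ X^(r−2)/(2^(r−2) r (r−1))`. -/
theorem stmt_12 (r X A : ℝ) (hr : 2 ≤ r) (hX : 0 < X) :
    X ^ (r - 2) / ((2 : ℝ) ^ (r - 2) * r * (r - 1)) ≤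
      ∫ θ in (0 : ℝ)..1, (1 - θ) * |A + X * θ| ^ (r - 2) := by
  have hr0 : (0:ℝ) < r := by linarith
  have hr1 : (0:ℝ) < r - 1 := by linarith
  have hXne : X ≠ 0 := hX.ne'
  set H : ℝ → ℝ := fun θ =>
    (1 - θ) * ((A + X * θ) * |A + X * θ| ^ (r - 2)) / ((r - 1) * X)
      + |A + X * θ| ^ r / (r * (r - 1) * X ^ 2) with hHdef
  have hHd : ∀ θ : ℝ, HasDerivAt H ((1 - θ) * |A + X * θ| ^ (r - 2)) θ := by
    intro θ
    have hin : HasDerivAt (fun s : ℝ => A + X * s) X θ := by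
      simpa using ((hasDerivAt_id θ).const_mul X).const_add A
    have d1 : HasDerivAt (fun s : ℝ => 1 - s) (-1) θ := by
      simpa using (hasDerivAt_id θ).const_sub 1
    have d2 : HasDerivAt (fun s : ℝ => (A + X * s) * |A + X * s| ^ (r - 2))
        ((r - 1) * |A + X * θ| ^ (r - 2) * X) θ :=
      ((aux_hasDerivAt_phi hr (A + X * θ)).comp θ hin :)
    have d3 := aux_hasDerivAt_inner hr A X θ
    have hH : HasDerivAt H _ θ := ((d1.mul d2).div_const ((r - 1) * X)).add (d3.div_const (r * (r - 1) * X ^ 2))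
    convert hH using 1
    field_simp
    ring
  have hInt : IntervalIntegrable (fun θ : ℝ => (1 - θ) * |A + X * θ| ^ (r - 2))
      MeasureTheory.volume 0 1 := by
    apply Continuous.intervalIntegrable
    exact (continuous_const.sub continuous_id).mul (aux_cont_absr (by linarith) A X)
  have hFTC := intervalIntegral.integral_eq_sub_of_hasDerivAt
    (fun θ _ => hHd θ) hInt
  rw [hFTC]
  have hH1 : H 1 = |A + X| ^ r / (r * (r - 1) * X ^ 2) := by
    simp [hHdef]
  have hH0 : H 0 = A * |A| ^ (r - 2) / ((r - 1) * X) + |A| ^ r / (r * (r - 1) * X ^ 2) := by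
    simp [hHdef]
  rw [hH1, hH0]
  have htaylor := aux_taylor hr hX (A := A)
  have hD : (0:ℝ) < r * (r - 1) * X ^ 2 := by positivity
  have hcomb : |A + X| ^ r / (r * (r - 1) * X ^ 2)
      - (A * |A| ^ (r - 2) / ((r - 1) * X) + |A| ^ r / (r * (r - 1) * X ^ 2))
      = (|A + X| ^ r - |A| ^ r - r * X * (A * |A| ^ (r - 2))) / (r * (r - 1) * X ^ 2) := by
    field_simp
    ring
  rw [hcomb]
  have hLHS : X ^ (r - 2) / ((2 : ℝ) ^ (r - 2) * r * (r - 1))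
      = (2 ^ (2 - r) * X ^ r) / (r * (r - 1) * X ^ 2) := by
    have hXr2 : X ^ r = X ^ (r - 2) * X ^ 2 := by
      have h : X ^ (r - 2) * X ^ ((2:ℕ):ℝ) = X ^ (r - 2 + ((2:ℕ):ℝ)) :=
        (Real.rpow_add hX _ _).symm
      rw [Real.rpow_natCast] at h
      nth_rewrite 1 [show r = r - 2 + ((2:ℕ):ℝ) by push_cast; ring]
      exact h.symm
    have hB : (2:ℝ) ^ (2 - r) * 2 ^ (r - 2) = 1 := by
      rw [← Real.rpow_add two_pos, show 2 - r + (r - 2) = 0 by ring, Real.rpow_zero]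
    have h2pos : (0:ℝ) < (2:ℝ) ^ (r - 2) := Real.rpow_pos_of_pos two_pos _
    rw [hXr2, div_eq_div_iff (by positivity) hD.ne']
    linear_combination (-(X ^ (r - 2) * X ^ 2 * r * (r - 1))) * hB
  rw [hLHS]
  rw [div_le_div_iff_of_pos_right hD]
  linarith
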